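/- Let L be a G-graded field with graded subfields k ⊆ K ⊆ L and k ⊆ l ⊆ L, and let H ⊆ G be a subgroup containing ρ(l^×) (hence also ρ(k^×)). For a graded field F write F_H = ⊕_{h∈H} F_h, a graded subfield of F. Then the natural map P_{L/l} → P_{K/k} ×_{P_{K_H/k}} P_{L_H/l}, sending O to (O ∩ K, O ∩ L_H), is surjective: for any graded valuation ring O' of K containing k and any graded valuation ring O'' of L_H containing l with O' ∩ K_H = O'' ∩ K_H, there exists a graded valuation ring O of L containing l with O ∩ K = O' and O ∩ L_H = O''. -/

import Mathlib

universe u v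

/-- A `G`-graded commutative ring structure on `A`: graded pieces `deg g`,
multiplicativity of the grading, and an internal direct sum decomposition
recorded by the homogeneous-component function `comp`. -/
structure GradedStr (G : Type u) [CommGroup G] (A : Type v) [CommRing A] where
  deg : G → AddSubgroup A
  one_mem : (1 : A) ∈ deg 1
  mul_mem : ∀ {g h : G} {a b : A}, a ∈ deg g → b ∈ deg h → a * b ∈ deg (g * h)
  comp : A → G → A
  comp_mem : ∀ a g, comp a g ∈ deg g
  comp_add : ∀ a b g, comp (a + b) g = comp a g + comp b g
  comp_of_mem : ∀ {a : A} {g : G}, a ∈ deg g → comp a g = a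
  comp_of_mem_ne : ∀ {a : A} {g g' : G}, a ∈ deg g → g' ≠ g → comp a g' = 0
  finite_support : ∀ a : A, (Function.support (comp a)).Finite
  sum_comp : ∀ a : A, ∑ᶠ g, comp a g = a

namespace GradedStr

variable {G : Type u} [CommGroup G] {A : Type v} [CommRing A]

/-- `a` is homogeneous: it lies in some graded piece. -/
def IsHomog (𝒜 : GradedStr G A) (a : A) : Prop := ∃ g, a ∈ 𝒜.deg g

/-- A `G`-graded field: a nonzero graded ring in which every nonzero homogeneous
element is invertible. -/
def IsGradedField (𝒜 : GradedStr G A) : Prop :=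
  Nontrivial A ∧ ∀ a : A, 𝒜.IsHomog a → a ≠ 0 → IsUnit a

/-- A graded subring: a subring stable under taking homogeneous components. -/
def IsGradedSubring (𝒜 : GradedStr G A) (S : Subring A) : Prop :=
  ∀ x ∈ S, ∀ g, 𝒜.comp x g ∈ S

/-- A graded subfield of a graded field: a graded subring containing the inverses of
its nonzero homogeneous elements. -/
def IsGradedSubfield (𝒜 : GradedStr G A) (S : Subring A) : Prop :=
  𝒜.IsGradedSubring S ∧ ∀ x ∈ S, 𝒜.IsHomog x → x ≠ 0 → Ring.inverse x ∈ S

/-- The additive subgroup of homogeneous polynomials of grading `h` in `K[g₀⁻¹ T]`,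
the polynomial ring in which `T` is declared homogeneous of grading `g₀`: the
coefficient of `T^n` must be homogeneous of grading `h * g₀⁻ⁿ`. -/
def polyDeg (𝒜 : GradedStr G A) (g₀ h : G) : AddSubgroup (Polynomial A) where
  carrier := {p | ∀ n : ℕ, p.coeff n ∈ 𝒜.deg (h * (g₀ ^ n)⁻¹)}
  zero_mem' := by intro n; simpa using (𝒜.deg (h * (g₀ ^ n)⁻¹)).zero_mem
  add_mem' := by
    intro p q hp hq n
    rw [Polynomial.coeff_add]
    exact (𝒜.deg _).add_mem (hp n) (hq n)
  neg_mem' := by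
    intro p hp n
    rw [Polynomial.coeff_neg]
    exact (𝒜.deg _).neg_mem (hp n)

/-- A homogeneous polynomial in `K[g₀⁻¹T]`. -/
def IsHomogPoly (𝒜 : GradedStr G A) (g₀ : G) (p : Polynomial A) : Prop :=
  ∃ h, p ∈ 𝒜.polyDeg g₀ h

/-- The graded fraction field of a graded subring of a graded field, computed inside
the ambient graded field: the subring generated by `S` together with the inverses of
the nonzero homogeneous elements of `S`. -/
def fracIn (𝒜 : GradedStr G A) (S : Subring A) : Subring A :=
  Subring.closure (↑S ∪ {y : A | ∃ x ∈ S, x ≠ 0 ∧ 𝒜.IsHomog x ∧ y = Ring.inverse x})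

end GradedStr

namespace GradedStr

variable {G : Type u} [CommGroup G] {A : Type v} [CommRing A]

lemma comp_zero' (𝒜 : GradedStr G A) (g : G) : 𝒜.comp 0 g = 0 :=
  𝒜.comp_of_mem ((𝒜.deg g).zero_mem)

/-- The homogeneous-component map as an additive monoid hom. -/
def compHom (𝒜 : GradedStr G A) (g : G) : A →+ A where
  toFun a := 𝒜.comp a g
  map_zero' := 𝒜.comp_zero' g
  map_add' a b := 𝒜.comp_add a b g

lemma comp_neg' (𝒜 : GradedStr G A) (x : A) (g : G) : 𝒜.comp (-x) g = -𝒜.comp x g :=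
  (𝒜.compHom g).map_neg x

lemma deg_unique (𝒜 : GradedStr G A) {a : A} {g g' : G}
    (ha : a ∈ 𝒜.deg g) (ha' : a ∈ 𝒜.deg g') (h0 : a ≠ 0) : g = g' := by
  by_contra h
  have h1 : 𝒜.comp a g' = a := 𝒜.comp_of_mem ha'
  have h2 : 𝒜.comp a g' = 0 := 𝒜.comp_of_mem_ne ha (fun e => h e.symm)
  exact h0 (by rw [← h1, h2])

lemma comp_mul_left (𝒜 : GradedStr G A) {g : G} {a : A} (ha : a ∈ 𝒜.deg g) (y : A)
    (g' : G) : 𝒜.comp (a * y) g' = a * 𝒜.comp y (g⁻¹ * g') := by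
  have hsupp : (Function.support fun h => a * 𝒜.comp y h).Finite :=
    (𝒜.finite_support y).subset (by
      intro h hh
      simp only [Function.mem_support] at hh ⊢
      intro h0
      exact hh (by rw [h0, mul_zero]))
  have hy : a * y = ∑ᶠ h, a * 𝒜.comp y h := by
    conv_lhs => rw [← 𝒜.sum_comp y]
    rw [mul_finsum' _ _ (𝒜.finite_support y)]
  rw [hy]
  have : 𝒜.comp (∑ᶠ h, a * 𝒜.comp y h) g' = ∑ᶠ h, 𝒜.comp (a * 𝒜.comp y h) g' :=
    (𝒜.compHom g').map_finsum hsupp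
  rw [this]
  rw [finsum_eq_single _ (g⁻¹ * g')]
  · have hmem : a * 𝒜.comp y (g⁻¹ * g') ∈ 𝒜.deg g' := by
      have := 𝒜.mul_mem ha (𝒜.comp_mem y (g⁻¹ * g'))
      rwa [mul_inv_cancel_left] at this
    exact 𝒜.comp_of_mem hmem
  · intro h hne
    have hmem : a * 𝒜.comp y h ∈ 𝒜.deg (g * h) := 𝒜.mul_mem ha (𝒜.comp_mem y h)
    refine 𝒜.comp_of_mem_ne hmem ?_
    intro e
    exact hne (by rw [e]; group)

lemma inv_homog (𝒜 : GradedStr G A) {u : Aˣ} {g : G} (h : (↑u : A) ∈ 𝒜.deg g) :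
    ((↑u⁻¹ : A)) ∈ 𝒜.deg g⁻¹ := by
  have key : ∀ g' : G, g' ≠ g⁻¹ → 𝒜.comp (↑u⁻¹ : A) g' = 0 := by
    intro g' hne
    have h1 : (↑u : A) * 𝒜.comp (↑u⁻¹ : A) g' = 𝒜.comp ((↑u : A) * (↑u⁻¹ : A)) (g * g') := by
      rw [𝒜.comp_mul_left h, inv_mul_cancel_left]
    rw [Units.mul_inv] at h1
    have h2 : 𝒜.comp (1 : A) (g * g') = 0 := by
      refine 𝒜.comp_of_mem_ne 𝒜.one_mem ?_
      intro e
      exact hne (by rw [eq_inv_iff_mul_eq_one, mul_comm]; exact e)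
    rw [h2] at h1
    exact (Units.mul_right_eq_zero u).mp h1
  have : (↑u⁻¹ : A) = 𝒜.comp (↑u⁻¹ : A) g⁻¹ := by
    conv_lhs => rw [← 𝒜.sum_comp (↑u⁻¹ : A)]
    exact finsum_eq_single _ g⁻¹ key
  rw [this]
  exact 𝒜.comp_mem _ _

lemma comp_one_ne (𝒜 : GradedStr G A) {g : G} (h : g ≠ 1) : 𝒜.comp 1 g = 0 :=
  𝒜.comp_of_mem_ne 𝒜.one_mem h

end GradedStr


section ConeExt

/-- Extension of a compatible pair of total multiplicative preorders (cones) on two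
subgroups of a commutative group to a total cone on the whole group. -/
theorem exists_total_cone {Γ : Type*} [CommGroup Γ] (A B CA CB : Set Γ)
    (hA1 : (1:Γ) ∈ A) (hAm : ∀ x ∈ A, ∀ y ∈ A, x * y ∈ A) (hAi : ∀ x ∈ A, x⁻¹ ∈ A)
    (hB1 : (1:Γ) ∈ B) (hBm : ∀ x ∈ B, ∀ y ∈ B, x * y ∈ B) (hBi : ∀ x ∈ B, x⁻¹ ∈ B)
    (hCAA : CA ⊆ A) (hCA1 : (1:Γ) ∈ CA) (hCAm : ∀ x ∈ CA, ∀ y ∈ CA, x * y ∈ CA)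
    (hCAt : ∀ x ∈ A, x ∈ CA ∨ x⁻¹ ∈ CA)
    (hCBB : CB ⊆ B) (hCB1 : (1:Γ) ∈ CB) (hCBm : ∀ x ∈ CB, ∀ y ∈ CB, x * y ∈ CB)
    (hCBt : ∀ x ∈ B, x ∈ CB ∨ x⁻¹ ∈ CB)
    (hcomp : CA ∩ B = CB ∩ A) :
    ∃ C : Set Γ, (1:Γ) ∈ C ∧ (∀ x ∈ C, ∀ y ∈ C, x * y ∈ C) ∧
      (∀ x : Γ, x ∈ C ∨ x⁻¹ ∈ C) ∧ (∀ x : Γ, ∀ n : ℕ, 0 < n → x ^ n ∈ C → x ∈ C) ∧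
      C ∩ A = CA ∧ C ∩ B = CB := by
  -- power closure of a multiplicative set
  have powmem : ∀ (S : Set Γ), (1:Γ) ∈ S → (∀ x ∈ S, ∀ y ∈ S, x * y ∈ S) →
      ∀ x ∈ S, ∀ n : ℕ, x ^ n ∈ S := by
    intro S h1 hm x hx n
    induction n with
    | zero => simpa using h1
    | succ n ih => rw [pow_succ]; exact hm _ ih _ hx
  have powA : ∀ x ∈ A, ∀ n : ℕ, x ^ n ∈ A := powmem A hA1 hAm
  have powB : ∀ x ∈ B, ∀ n : ℕ, x ^ n ∈ B := powmem B hB1 hBm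
  -- saturation of CA, CB
  have satgen : ∀ (S CS : Set Γ), CS ⊆ S → (1:Γ) ∈ CS →
      (∀ x ∈ CS, ∀ y ∈ CS, x * y ∈ CS) → (∀ x ∈ S, x ∈ CS ∨ x⁻¹ ∈ CS) →
      ∀ x ∈ S, ∀ n : ℕ, 0 < n → x ^ n ∈ CS → x ∈ CS := by
    intro S CS hsub h1 hm ht x hx n hn hxn
    rcases ht x hx with h | h
    · exact h
    · obtain ⟨m, rfl⟩ := Nat.exists_eq_succ_of_ne_zero hn.ne'
      have hx' : x = x ^ (m + 1) * (x⁻¹) ^ m := by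
        rw [inv_pow, pow_succ, mul_comm (x ^ m) x, mul_assoc, mul_inv_cancel, mul_one]
      rw [hx']
      exact hm _ hxn _ (powmem CS h1 hm _ h m)
  have satA := satgen A CA hCAA hCA1 hCAm hCAt
  have satB := satgen B CB hCBB hCB1 hCBm hCBt
  -- the collection for Zorn
  set 𝒮 : Set (Set Γ) := {C | CA ⊆ C ∧ CB ⊆ C ∧ (1:Γ) ∈ C ∧
      (∀ x ∈ C, ∀ y ∈ C, x * y ∈ C) ∧
      (∀ x : Γ, ∀ n : ℕ, 0 < n → x ^ n ∈ C → x ∈ C) ∧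
      C ∩ A = CA ∧ C ∩ B = CB} with h𝒮
  -- the base cone
  set C₀ : Set Γ := {x | ∃ n : ℕ, 0 < n ∧ ∃ a ∈ CA, ∃ b ∈ CB, x ^ n = a * b} with hC₀def
  have hC₀ : C₀ ∈ 𝒮 := by
    have hCAC₀ : CA ⊆ C₀ := fun a ha => ⟨1, one_pos, a, ha, 1, hCB1, by simp⟩
    have hCBC₀ : CB ⊆ C₀ := fun b hb => ⟨1, one_pos, 1, hCA1, b, hb, by simp⟩
    refine ⟨hCAC₀, hCBC₀, hCAC₀ hCA1, ?_, ?_, ?_, ?_⟩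
    · rintro x ⟨n, hn, a, ha, b, hb, hx⟩ y ⟨n', hn', a', ha', b', hb', hy⟩
      refine ⟨n * n', Nat.mul_pos hn hn', a ^ n' * a' ^ n,
        hCAm _ (powmem CA hCA1 hCAm _ ha n') _ (powmem CA hCA1 hCAm _ ha' n),
        b ^ n' * b' ^ n,
        hCBm _ (powmem CB hCB1 hCBm _ hb n') _ (powmem CB hCB1 hCBm _ hb' n), ?_⟩
      calc (x * y) ^ (n * n') = (x ^ n) ^ n' * (y ^ n') ^ n := by
            rw [mul_pow, pow_mul]
            congr 1
            rw [Nat.mul_comm, pow_mul]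
        _ = (a * b) ^ n' * (a' * b') ^ n := by rw [hx, hy]
        _ = a ^ n' * a' ^ n * (b ^ n' * b' ^ n) := by
            rw [mul_pow, mul_pow, mul_mul_mul_comm]
    · rintro x n hn ⟨m, hm, a, ha, b, hb, hx⟩
      exact ⟨n * m, Nat.mul_pos hn hm, a, ha, b, hb, by rw [pow_mul, hx]⟩
    · apply Set.Subset.antisymm
      · rintro x ⟨⟨n, hn, a, ha, b, hb, hx⟩, hxA⟩
        have hbB : b ∈ B := hCBB hb
        have hbA : b ∈ A := by
          have : b = a⁻¹ * x ^ n := by rw [hx, ← mul_assoc, inv_mul_cancel, one_mul]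
          rw [this]
          exact hAm _ (hAi _ (hCAA ha)) _ (powA x hxA n)
        have hbCA : b ∈ CA := by
          have : b ∈ CB ∩ A := ⟨hb, hbA⟩
          rw [← hcomp] at this
          exact this.1
        exact satA x hxA n hn (hx ▸ hCAm a ha b hbCA)
      · exact fun a ha => ⟨hCAC₀ ha, hCAA ha⟩
    · apply Set.Subset.antisymm
      · rintro x ⟨⟨n, hn, a, ha, b, hb, hx⟩, hxB⟩
        have haA : a ∈ A := hCAA ha
        have haB : a ∈ B := by
          have : a = x ^ n * b⁻¹ := by rw [hx, mul_assoc, mul_inv_cancel, mul_one]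
          rw [this]
          exact hBm _ (powB x hxB n) _ (hBi _ (hCBB hb))
        have haCB : a ∈ CB := by
          have : a ∈ CA ∩ B := ⟨ha, haB⟩
          rw [hcomp] at this
          exact this.1
        exact satB x hxB n hn (hx ▸ hCBm a haCB b hb)
      · exact fun b hb => ⟨hCBC₀ hb, hCBB hb⟩
  -- Zorn
  obtain ⟨C, hC₀C, hCmax⟩ := zorn_subset_nonempty 𝒮 (fun c hc hchain hne => by
    refine ⟨⋃₀ c, ?_, fun s hs => Set.subset_sUnion_of_mem hs⟩
    obtain ⟨s₀, hs₀⟩ := hne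
    have hs₀𝒮 := hc hs₀
    refine ⟨hs₀𝒮.1.trans (Set.subset_sUnion_of_mem hs₀),
      hs₀𝒮.2.1.trans (Set.subset_sUnion_of_mem hs₀),
      Set.mem_sUnion.2 ⟨s₀, hs₀, hs₀𝒮.2.2.1⟩, ?_, ?_, ?_, ?_⟩
    · rintro x ⟨s, hs, hxs⟩ y ⟨t, ht, hyt⟩
      rcases hchain.total hs ht with h | h
      · exact ⟨t, ht, (hc ht).2.2.2.1 x (h hxs) y hyt⟩
      · exact ⟨s, hs, (hc hs).2.2.2.1 x hxs y (h hyt)⟩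
    · rintro x n hn ⟨s, hs, hxs⟩
      exact ⟨s, hs, (hc hs).2.2.2.2.1 x n hn hxs⟩
    · apply Set.Subset.antisymm
      · rintro x ⟨⟨s, hs, hxs⟩, hxA⟩
        have := (hc hs).2.2.2.2.2.1
        rw [← this]; exact ⟨hxs, hxA⟩
      · intro a ha
        exact ⟨Set.mem_sUnion.2 ⟨s₀, hs₀, hs₀𝒮.1 ha⟩, hCAA ha⟩
    · apply Set.Subset.antisymm
      · rintro x ⟨⟨s, hs, hxs⟩, hxB⟩
        have := (hc hs).2.2.2.2.2.2
        rw [← this]; exact ⟨hxs, hxB⟩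
      · intro b hb
        exact ⟨Set.mem_sUnion.2 ⟨s₀, hs₀, hs₀𝒮.2.1 hb⟩, hCBB hb⟩) C₀ hC₀
  obtain ⟨hCAC, hCBC, hC1, hCm, hCsat, hCA', hCB'⟩ := hCmax.1
  -- totality
  have htot : ∀ x : Γ, x ∈ C ∨ x⁻¹ ∈ C := by
    intro x
    by_contra hcon
    push_neg at hcon
    obtain ⟨hx1, hx2⟩ := hcon
    -- the one-step extensions
    set D : Γ → Set Γ := fun lam =>
      {z | ∃ n : ℕ, 0 < n ∧ ∃ m : ℕ, ∃ c ∈ C, z ^ n = c * lam ^ m} with hDdef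
    have hCD : ∀ lam, C ⊆ D lam := fun lam z hz => ⟨1, one_pos, 0, z, hz, by simp⟩
    have hlamD : ∀ lam, lam ∈ D lam := fun lam => ⟨1, one_pos, 1, 1, hC1, by simp⟩
    have hDm : ∀ lam, ∀ z ∈ D lam, ∀ w ∈ D lam, z * w ∈ D lam := by
      rintro lam z ⟨n, hn, m, c, hc, hz⟩ w ⟨n', hn', m', c', hc', hw⟩
      refine ⟨n * n', Nat.mul_pos hn hn', m * n' + m' * n, c ^ n' * c' ^ n,
        hCm _ (powmem C hC1 hCm _ hc n') _ (powmem C hC1 hCm _ hc' n), ?_⟩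
      calc (z * w) ^ (n * n') = (z ^ n) ^ n' * (w ^ n') ^ n := by
            rw [mul_pow, pow_mul]
            congr 1
            rw [Nat.mul_comm, pow_mul]
        _ = (c * lam ^ m) ^ n' * (c' * lam ^ m') ^ n := by rw [hz, hw]
        _ = c ^ n' * c' ^ n * (lam ^ (m * n') * lam ^ (m' * n)) := by
            rw [mul_pow, mul_pow, ← pow_mul, ← pow_mul, mul_mul_mul_comm]
        _ = c ^ n' * c' ^ n * lam ^ (m * n' + m' * n) := by rw [← pow_add]
    have hDsat : ∀ lam, ∀ z : Γ, ∀ n : ℕ, 0 < n → z ^ n ∈ D lam → z ∈ D lam := by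
      rintro lam z n hn ⟨k, hk, m, c, hc, hz⟩
      exact ⟨n * k, Nat.mul_pos hn hk, m, c, hc, by rw [pow_mul, hz]⟩
    -- if an extension fails, extract a witness
    have hbad : ∀ lam : Γ, D lam ∉ 𝒮 →
        ∃ z : Γ, z ∉ C ∧ z⁻¹ ∈ C ∧ ∃ n m : ℕ, 0 < n ∧ 0 < m ∧ ∃ c ∈ C,
          z ^ n = c * lam ^ m := by
      intro lam hD
      have hDA : ¬ (D lam ∩ A = CA) ∨ ¬ (D lam ∩ B = CB) := by
        by_contra hcon2
        push_neg at hcon2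
        exact hD ⟨hCAC.trans (hCD lam), hCBC.trans (hCD lam), hCD lam hC1,
          hDm lam, hDsat lam, hcon2.1, hcon2.2⟩
      have key : ∀ (S CS : Set Γ), C ∩ S = CS → (∀ x ∈ S, x ∈ CS ∨ x⁻¹ ∈ CS) →
          ¬ (D lam ∩ S = CS) →
          ∃ z : Γ, z ∉ C ∧ z⁻¹ ∈ C ∧ ∃ n m : ℕ, 0 < n ∧ 0 < m ∧ ∃ c ∈ C,
            z ^ n = c * lam ^ m := by
        intro S CS hCS htS hne
        have hsub : CS ⊆ D lam ∩ S := by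
          rw [← hCS]
          exact fun z hz => ⟨hCD lam hz.1, hz.2⟩
        have : ∃ z ∈ D lam ∩ S, z ∉ CS := by
          by_contra hcon3
          push_neg at hcon3
          exact hne (Set.Subset.antisymm hcon3 hsub)
        obtain ⟨z, ⟨⟨n, hn, m, c, hc, hz⟩, hzS⟩, hzCS⟩ := this
        have hzinv : z⁻¹ ∈ CS := (htS z hzS).resolve_left hzCS
        have hzC : z ∉ C := fun h => hzCS (hCS ▸ ⟨h, hzS⟩)
        have hzinvC : z⁻¹ ∈ C := by rw [← hCS] at hzinv; exact hzinv.1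
        have hm : 0 < m := by
          rcases Nat.eq_zero_or_pos m with rfl | h
          · exfalso
            apply hzC
            apply hCsat z n hn
            rw [hz]; simpa using hc
          · exact h
        exact ⟨z, hzC, hzinvC, n, m, hn, hm, c, hc, hz⟩
      rcases hDA with h | h
      · exact key A CA hCA' hCAt h
      · exact key B CB hCB' hCBt h
    -- both extensions must fail
    have hDx : D x ∉ 𝒮 := by
      intro hmem
      exact hx1 (hCmax.2 hmem (hCD x) (hlamD x))
    have hDxi : D x⁻¹ ∉ 𝒮 := by
      intro hmem
      exact hx2 (hCmax.2 hmem (hCD x⁻¹) (hlamD x⁻¹))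
    obtain ⟨z, hzC, hziC, n, m, hn, hm, c, hc, hz⟩ := hbad x hDx
    obtain ⟨w, hwC, hwiC, k, j, hk, hj, d, hd, hw⟩ := hbad x⁻¹ hDxi
    -- derive the contradiction
    have e1 : z ^ (n * j) = c ^ j * x ^ (m * j) := by
      rw [pow_mul, hz, mul_pow, ← pow_mul]
    have e2 : w ^ (k * m) = d ^ m * (x⁻¹) ^ (j * m) := by
      rw [pow_mul, hw, mul_pow, ← pow_mul]
    have e3 : z ^ (n * j) * w ^ (k * m) = c ^ j * d ^ m := by
      rw [e1, e2, mul_mul_mul_comm]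
      simp [inv_pow, Nat.mul_comm j m]
    have e4 : z ^ (n * j) = (c ^ j * d ^ m) * (w⁻¹) ^ (k * m) := by
      rw [← e3, inv_pow, mul_assoc, mul_inv_cancel, mul_one]
    have hzin : z ^ (n * j) ∈ C := by
      rw [e4]
      exact hCm _ (hCm _ (powmem C hC1 hCm _ hc j) _ (powmem C hC1 hCm _ hd m)) _
        (powmem C hC1 hCm _ hwiC (k * m))
    exact hzC (hCsat z (n * j) (Nat.mul_pos hn hj) hzin)
  exact ⟨C, hC1, hCm, htot, hCsat, hCA', hCB'⟩

end ConeExt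

/-- `x` is integral over the subring `S` (satisfies a monic polynomial equation with
coefficients in `S`). -/
def IntegralOver {A : Type v} [CommRing A] (S : Subring A) (x : A) : Prop :=
  ∃ p : Polynomial A, p.Monic ∧ (∀ n, p.coeff n ∈ S) ∧ Polynomial.eval x p = 0

/-- Algebraic independence of a family of elements over a subring: the evaluation map
from the (multivariate) polynomial ring is injective.  (For homogeneous elements this
is graded algebraic independence, the grading playing no role in injectivity.) -/
def AlgIndepOver {A : Type v} [CommRing A] {ι : Type*} (S : Subring A) (T : ι → A) : Prop :=
  Function.Injective (MvPolynomial.eval₂Hom S.subtype T)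

/-- A graded valuation ring of the graded subfield `F` of the ambient graded field:
a graded subring `O ⊆ F` such that every nonzero homogeneous element `f` of `F`
satisfies `f ∈ O` or `f⁻¹ ∈ O`. -/
def IsGVRofSubfield {G : Type u} [CommGroup G] {A : Type v} [CommRing A]
    (𝒜 : GradedStr G A) (F : Subring A) (O : Subring A) : Prop :=
  O ≤ F ∧ 𝒜.IsGradedSubring O ∧
    ∀ f ∈ F, f ≠ 0 → 𝒜.IsHomog f → f ∈ O ∨ Ring.inverse f ∈ O

section Statement17

variable {G : Type u} [CommGroup G] {L : Type v} [CommRing L]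

/-- The `H`-part `S_H = ⊕_{h∈H} S_h` of a graded subset `S`: the elements of `S` all
of whose nonzero homogeneous components have grading in `H`. -/
def HPart (𝒜 : GradedStr G L) (H : Subgroup G) (S : Set L) : Set L :=
  {x : L | x ∈ S ∧ ∀ g : G, g ∉ H → 𝒜.comp x g = 0}

/-- A graded valuation ring of the graded subfield `F` (all given as subsets):
a graded subring `O ⊆ F` such that every nonzero homogeneous `f ∈ F` satisfies
`f ∈ O` or `f⁻¹ ∈ O`. -/
def IsGVRofSet (𝒜 : GradedStr G L) (F O : Set L) : Prop :=
  O ⊆ F ∧ (0 : L) ∈ O ∧ (1 : L) ∈ O ∧ (∀ x ∈ O, ∀ y ∈ O, x + y ∈ O) ∧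
    (∀ x ∈ O, -x ∈ O) ∧ (∀ x ∈ O, ∀ y ∈ O, x * y ∈ O) ∧
    (∀ x ∈ O, ∀ g, 𝒜.comp x g ∈ O) ∧
    ∀ f ∈ F, f ≠ 0 → 𝒜.IsHomog f → f ∈ O ∨ Ring.inverse f ∈ O

/-- Let `L` be a `G`-graded field with graded subfields
`k ⊆ K ⊆ L` and `k ⊆ l ⊆ L`, and let `H ⊆ G` be a subgroup containing `ρ(l^×)`.
The natural map `P_{L/l} → P_{K/k} ×_{P_{K_H/k}} P_{L_H/l}`, `O ↦ (O ∩ K, O ∩ L_H)`,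
is surjective: for any graded valuation ring `O'` of `K` containing `k` and any
graded valuation ring `O''` of `L_H` containing `l` with `O' ∩ K_H = O'' ∩ K_H`,
there exists a graded valuation ring `O` of `L` containing `l` with `O ∩ K = O'` and
`O ∩ L_H = O''`. -/
theorem psi_fiber_product_surjective
    (𝒜 : GradedStr G L) (hL : 𝒜.IsGradedField)
    (k K l : Subring L)
    (hk : 𝒜.IsGradedSubfield k) (hK : 𝒜.IsGradedSubfield K)
    (hl : 𝒜.IsGradedSubfield l) (hkK : k ≤ K) (hkl : k ≤ l)
    (H : Subgroup G)
    (hlH : ∀ x ∈ l, x ≠ 0 → ∀ g : G, x ∈ 𝒜.deg g → g ∈ H)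
    (O' : Subring L) (hO' : IsGVRofSubfield 𝒜 K O') (hkO' : k ≤ O')
    (O'' : Set L) (hO'' : IsGVRofSet 𝒜 (HPart 𝒜 H Set.univ) O'')
    (hlO'' : (l : Set L) ⊆ O'')
    (hcompat : ↑O' ∩ HPart 𝒜 H ↑K = O'' ∩ HPart 𝒜 H ↑K) :
    ∃ O : Subring L, (IsGVRofSubfield 𝒜 ⊤ O ∧ l ≤ O) ∧
      O ⊓ K = O' ∧ ↑O ∩ HPart 𝒜 H Set.univ = O''    := by
  classical
  obtain ⟨hLnt, hLinv⟩ := hL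
  obtain ⟨hO''F, hO''0, hO''1, hO''add, hO''neg, hO''mul, hO''comp, hO''val⟩ := hO''
  -- the subgroup of homogeneous units of `L`
  set Λs : Subgroup Lˣ :=
    { carrier := {u : Lˣ | 𝒜.IsHomog ↑u}
      one_mem' := ⟨1, 𝒜.one_mem⟩
      mul_mem' := by
        rintro u v ⟨g, hg⟩ ⟨h, hh⟩
        exact ⟨g * h, by simpa using 𝒜.mul_mem hg hh⟩
      inv_mem' := by
        rintro u ⟨g, hg⟩
        exact ⟨g⁻¹, by simpa using 𝒜.inv_homog hg⟩ } with hΛs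
  have hu_ne : ∀ u : Λs, ((u : Lˣ) : L) ≠ 0 := fun u => Units.ne_zero _
  have hu_homog : ∀ u : Λs, 𝒜.IsHomog ((u : Lˣ) : L) := fun u => u.2
  have hval_inv : ∀ u : Λs, (((u⁻¹ : Λs) : Lˣ) : L) = Ring.inverse ((u : Lˣ) : L) := by
    intro u
    rw [Ring.inverse_unit]
    rfl
  -- extraction of homogeneous units
  have hunit : ∀ x : L, x ≠ 0 → 𝒜.IsHomog x → ∃ u : Λs, ((u : Lˣ) : L) = x := by
    intro x hx hxh
    obtain ⟨v, hv⟩ := hLinv x hxh hx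
    exact ⟨⟨v, show 𝒜.IsHomog ((v : Lˣ) : L) by rw [hv]; exact hxh⟩, hv⟩
  -- homogeneous elements with grading in `H` lie in `HPart`
  have hhomHP : ∀ (x : L) (g : G), g ∈ H → x ∈ 𝒜.deg g →
      ∀ g', g' ∉ H → 𝒜.comp x g' = 0 := by
    intro x g hg hx g' hg'
    rcases eq_or_ne x 0 with rfl | hx0
    · exact 𝒜.comp_zero' g'
    · exact 𝒜.comp_of_mem_ne hx (fun e => hg' (e ▸ hg))
  -- the sets for the cone extension
  set A' : Set Λs := {u | ((u : Lˣ) : L) ∈ K} with hA'def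
  set B' : Set Λs := {u | ∃ g ∈ H, ((u : Lˣ) : L) ∈ 𝒜.deg g} with hB'def
  set CA : Set Λs := {u | ((u : Lˣ) : L) ∈ O'} with hCAdef
  set CB : Set Λs := {u | ((u : Lˣ) : L) ∈ O'' ∧ ∃ g ∈ H, ((u : Lˣ) : L) ∈ 𝒜.deg g}
    with hCBdef
  have hA1 : (1 : Λs) ∈ A' := show ((1 : Lˣ) : L) ∈ K by simpa using K.one_mem
  have hAm : ∀ u ∈ A', ∀ v ∈ A', u * v ∈ A' := by
    intro u hu v hv
    show (((u * v : Λs) : Lˣ) : L) ∈ K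
    have : (((u * v : Λs) : Lˣ) : L) = ((u : Lˣ) : L) * ((v : Lˣ) : L) := rfl
    rw [this]
    exact K.mul_mem hu hv
  have hAi : ∀ u ∈ A', u⁻¹ ∈ A' := by
    intro u hu
    show (((u⁻¹ : Λs) : Lˣ) : L) ∈ K
    rw [hval_inv u]
    exact hK.2 _ hu (hu_homog u) (hu_ne u)
  have hB1 : (1 : Λs) ∈ B' := ⟨1, H.one_mem, by simpa using 𝒜.one_mem⟩
  have hBm : ∀ u ∈ B', ∀ v ∈ B', u * v ∈ B' := by
    rintro u ⟨g, hg, hdeg⟩ v ⟨g', hg', hdeg'⟩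
    exact ⟨g * g', H.mul_mem hg hg', 𝒜.mul_mem hdeg hdeg'⟩
  have hBi : ∀ u ∈ B', u⁻¹ ∈ B' := by
    rintro u ⟨g, hg, hdeg⟩
    refine ⟨g⁻¹, H.inv_mem hg, ?_⟩
    show (((u⁻¹ : Λs) : Lˣ) : L) ∈ 𝒜.deg g⁻¹
    exact 𝒜.inv_homog hdeg
  have hCAA : CA ⊆ A' := fun u hu => hO'.1 hu
  have hCA1 : (1 : Λs) ∈ CA := show ((1 : Lˣ) : L) ∈ O' by simpa using O'.one_mem
  have hCAm : ∀ u ∈ CA, ∀ v ∈ CA, u * v ∈ CA := fun u hu v hv => O'.mul_mem hu hv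
  have hCAt : ∀ u ∈ A', u ∈ CA ∨ u⁻¹ ∈ CA := by
    intro u hu
    rcases hO'.2.2 _ hu (hu_ne u) (hu_homog u) with h | h
    · exact Or.inl h
    · right
      show (((u⁻¹ : Λs) : Lˣ) : L) ∈ O'
      rw [hval_inv u]
      exact h
  have hCBB : CB ⊆ B' := fun u hu => hu.2
  have hCB1 : (1 : Λs) ∈ CB :=
    ⟨by simpa using hO''1, 1, H.one_mem, by simpa using 𝒜.one_mem⟩
  have hCBm : ∀ u ∈ CB, ∀ v ∈ CB, u * v ∈ CB := by
    rintro u ⟨hu, g, hg, hdeg⟩ v ⟨hv, g', hg', hdeg'⟩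
    exact ⟨hO''mul _ hu _ hv, g * g', H.mul_mem hg hg', 𝒜.mul_mem hdeg hdeg'⟩
  have hCBt : ∀ u ∈ B', u ∈ CB ∨ u⁻¹ ∈ CB := by
    rintro u ⟨g, hg, hdeg⟩
    have hHP : ((u : Lˣ) : L) ∈ HPart 𝒜 H Set.univ :=
      ⟨Set.mem_univ _, hhomHP _ g hg hdeg⟩
    rcases hO''val _ hHP (hu_ne u) (hu_homog u) with h | h
    · exact Or.inl ⟨h, g, hg, hdeg⟩
    · right
      refine ⟨?_, g⁻¹, H.inv_mem hg, ?_⟩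
      · show (((u⁻¹ : Λs) : Lˣ) : L) ∈ O''
        rw [hval_inv u]
        exact h
      · show (((u⁻¹ : Λs) : Lˣ) : L) ∈ 𝒜.deg g⁻¹
        exact 𝒜.inv_homog hdeg
  have hccomp : CA ∩ B' = CB ∩ A' := by
    ext u
    constructor
    · rintro ⟨huO', g, hg, hdeg⟩
      have h1 : ((u : Lˣ) : L) ∈ (O' : Set L) ∩ HPart 𝒜 H (K : Set L) :=
        ⟨huO', hO'.1 huO', hhomHP _ g hg hdeg⟩
      rw [hcompat] at h1
      exact ⟨⟨h1.1, g, hg, hdeg⟩, hO'.1 huO'⟩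
    · rintro ⟨⟨huO'', g, hg, hdeg⟩, huK⟩
      have h1 : ((u : Lˣ) : L) ∈ O'' ∩ HPart 𝒜 H (K : Set L) :=
        ⟨huO'', huK, hhomHP _ g hg hdeg⟩
      rw [← hcompat] at h1
      exact ⟨h1.1, g, hg, hdeg⟩
  obtain ⟨C, hC1, hCm, hCt, hCsat, hCA', hCB'⟩ :=
    exists_total_cone A' B' CA CB hA1 hAm hAi hB1 hBm hBi hCAA hCA1 hCAm hCAt
      hCBB hCB1 hCBm hCBt hccomp
  -- the monoid of homogeneous elements of the new valuation ring
  set M : Set L := {x | x = 0 ∨ ∃ u : Λs, u ∈ C ∧ ((u : Lˣ) : L) = x} with hMdef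
  have hM0 : (0 : L) ∈ M := Or.inl rfl
  have hMmul : ∀ x ∈ M, ∀ y ∈ M, x * y ∈ M := by
    rintro x (rfl | ⟨u, huC, rfl⟩) y hy
    · exact Or.inl (zero_mul _)
    rcases hy with rfl | ⟨v, hvC, rfl⟩
    · exact Or.inl (mul_zero _)
    · exact Or.inr ⟨u * v, hCm _ huC _ hvC, rfl⟩
  -- `-1` lies in the cone
  have hm1mem : 𝒜.IsHomog ((((-1 : Lˣ)) : Lˣ) : L) := by
    refine ⟨1, ?_⟩
    simpa using (𝒜.deg 1).neg_mem 𝒜.one_mem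
  set m1 : Λs := ⟨(-1 : Lˣ), hm1mem⟩ with hm1def
  have hm1sq : m1 ^ 2 = 1 := by
    apply Subtype.ext
    apply Units.ext
    show ((((m1 : Lˣ) ^ 2 : Lˣ)) : L) = ((1 : Lˣ) : L)
    push_cast
    show ((-1 : L)) ^ 2 = 1
    exact neg_one_sq
  have hm1C : m1 ∈ C := hCsat m1 2 two_pos (by rw [hm1sq]; exact hC1)
  have hm1val : ((m1 : Lˣ) : L) = -1 := rfl
  have hMneg : ∀ x ∈ M, -x ∈ M := by
    rintro x (rfl | ⟨u, huC, rfl⟩)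
    · exact Or.inl neg_zero
    · refine Or.inr ⟨m1 * u, hCm _ hm1C _ huC, ?_⟩
      show ((m1 : Lˣ) : L) * ((u : Lˣ) : L) = -((u : Lˣ) : L)
      rw [hm1val, neg_one_mul]
  -- key: `M` is closed under addition of elements of the same grading
  have hkey : ∀ (g : G) (ua ub : Λs), ua ∈ C → ((ua : Lˣ) : L) ∈ 𝒜.deg g →
      ((ub : Lˣ) : L) ∈ 𝒜.deg g → (ub * ua⁻¹ : Λs) ∈ C →
      ((ua : Lˣ) : L) + ((ub : Lˣ) : L) ≠ 0 →
      ((ua : Lˣ) : L) + ((ub : Lˣ) : L) ∈ M := by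
    intro g ua ub huaC hag hbg htC hne0
    set t : Λs := ub * ua⁻¹ with htdef
    have htval : ((t : Lˣ) : L) = ((ub : Lˣ) : L) * (((ua : Lˣ)⁻¹ : Lˣ) : L) := rfl
    have htdeg : ((t : Lˣ) : L) ∈ 𝒜.deg 1 := by
      have h2 : (((ua : Lˣ)⁻¹ : Lˣ) : L) ∈ 𝒜.deg g⁻¹ := 𝒜.inv_homog hag
      have h3 := 𝒜.mul_mem hbg h2
      rw [mul_inv_cancel] at h3
      rw [htval]
      exact h3
    have htB : t ∈ B' := ⟨1, H.one_mem, htdeg⟩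
    have htCB : t ∈ CB := by rw [← hCB']; exact ⟨htC, htB⟩
    have hcalc : ((ua : Lˣ) : L) * ((1 : L) + ((t : Lˣ) : L)) =
        ((ua : Lˣ) : L) + ((ub : Lˣ) : L) := by
      rw [htval, mul_add, mul_one]
      congr 1
      calc ((ua : Lˣ) : L) * (((ub : Lˣ) : L) * (((ua : Lˣ)⁻¹ : Lˣ) : L))
          = ((ub : Lˣ) : L) * (((ua : Lˣ) : L) * (((ua : Lˣ)⁻¹ : Lˣ) : L)) := by ring
        _ = ((ub : Lˣ) : L) := by rw [Units.mul_inv, mul_one]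
    have hwne : (1 : L) + ((t : Lˣ) : L) ≠ 0 := by
      intro e
      apply hne0
      rw [← hcalc, e, mul_zero]
    have hwdeg : (1 : L) + ((t : Lˣ) : L) ∈ 𝒜.deg 1 :=
      (𝒜.deg 1).add_mem 𝒜.one_mem htdeg
    obtain ⟨w, hw⟩ := hunit _ hwne ⟨1, hwdeg⟩
    have hwCB : w ∈ CB := by
      refine ⟨?_, 1, H.one_mem, by rw [hw]; exact hwdeg⟩
      rw [hw]
      exact hO''add 1 hO''1 _ htCB.1
    have hwC : w ∈ C := by
      have h4 : w ∈ C ∩ B' := hCB' ▸ hwCB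
      exact h4.1
    refine Or.inr ⟨ua * w, hCm _ huaC _ hwC, ?_⟩
    show ((ua : Lˣ) : L) * ((w : Lˣ) : L) = _
    rw [hw, hcalc]
  have hMadd : ∀ (g : G) (a b : L), a ∈ M → b ∈ M → a ∈ 𝒜.deg g → b ∈ 𝒜.deg g →
      a + b ∈ M := by
    intro g a b ha hb hag hbg
    rcases ha with rfl | ⟨ua, huaC, rfl⟩
    · rw [zero_add]; exact hb
    rcases hb with rfl | ⟨ub, hubC, rfl⟩
    · rw [add_zero]; exact Or.inr ⟨ua, huaC, rfl⟩
    rcases eq_or_ne (((ua : Lˣ) : L) + ((ub : Lˣ) : L)) 0 with h0 | h0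
    · rw [h0]; exact hM0
    rcases hCt (ub * ua⁻¹) with htC | htC
    · exact hkey g ua ub huaC hag hbg htC h0
    · have h5 : (ub * ua⁻¹)⁻¹ = ua * ub⁻¹ := by group
      rw [h5] at htC
      have := hkey g ub ua hubC hbg hag htC (by rw [add_comm]; exact h0)
      rw [add_comm] at this
      exact this
  -- finite sums of same-degree elements of `M`
  have hMsum : ∀ (g : G) (s : Finset G) (f : G → L),
      (∀ i ∈ s, f i ∈ M ∧ f i ∈ 𝒜.deg g) → (∑ i ∈ s, f i) ∈ M := by
    intro g s f hf
    have := Finset.sum_induction f (fun z => z ∈ M ∧ z ∈ 𝒜.deg g)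
      (fun a b ha hb => ⟨hMadd g a b ha.1 hb.1 ha.2 hb.2, (𝒜.deg g).add_mem ha.2 hb.2⟩)
      ⟨hM0, (𝒜.deg g).zero_mem⟩ hf
    exact this.1
  -- components of homogeneous elements of `M` stay in `M`
  have hMcomp : ∀ z ∈ M, ∀ g', 𝒜.comp z g' ∈ M := by
    rintro z (rfl | ⟨u, huC, rfl⟩) g'
    · rw [𝒜.comp_zero']; exact hM0
    · obtain ⟨g, hg⟩ := hu_homog u
      by_cases h : g' = g
      · rw [h, 𝒜.comp_of_mem hg]; exact Or.inr ⟨u, huC, rfl⟩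
      · rw [𝒜.comp_of_mem_ne hg h]; exact hM0
  -- multiplicativity of the component condition
  have hOmul : ∀ x y : L, (∀ g, 𝒜.comp x g ∈ M) → (∀ g, 𝒜.comp y g ∈ M) →
      ∀ g₀, 𝒜.comp (x * y) g₀ ∈ M := by
    intro x y hx hy g₀
    have hxy : x * y = ∑ᶠ g, 𝒜.comp x g * y := by
      conv_lhs => rw [← 𝒜.sum_comp x]
      rw [finsum_mul' _ _ (𝒜.finite_support x)]
    have hsupp : (Function.support fun g => 𝒜.comp x g * y).Finite :=
      (𝒜.finite_support x).subset (by
        intro g hg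
        simp only [Function.mem_support] at hg ⊢
        intro h0
        exact hg (by rw [h0, zero_mul]))
    have hterm : ∀ g, 𝒜.comp (𝒜.comp x g * y) g₀ = 𝒜.comp x g * 𝒜.comp y (g⁻¹ * g₀) :=
      fun g => 𝒜.comp_mul_left (𝒜.comp_mem x g) y g₀
    have hsupp2 : (Function.support fun g => 𝒜.comp (𝒜.comp x g * y) g₀).Finite :=
      (𝒜.finite_support x).subset (by
        intro g hg
        simp only [Function.mem_support] at hg ⊢
        intro h0
        exact hg (by rw [h0, zero_mul, 𝒜.comp_zero']))
    have hmap : 𝒜.comp (∑ᶠ g, 𝒜.comp x g * y) g₀ = ∑ᶠ g, 𝒜.comp (𝒜.comp x g * y) g₀ :=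
      (𝒜.compHom g₀).map_finsum hsupp
    rw [hxy, hmap, finsum_eq_sum _ hsupp2]
    refine hMsum g₀ _ _ ?_
    intro g _
    constructor
    · rw [hterm g]
      exact hMmul _ (hx g) _ (hy _)
    · rw [hterm g]
      have h6 := 𝒜.mul_mem (𝒜.comp_mem x g) (𝒜.comp_mem y (g⁻¹ * g₀))
      rwa [mul_inv_cancel_left] at h6
  -- the valuation ring
  set O : Subring L :=
    { carrier := {x : L | ∀ g, 𝒜.comp x g ∈ M}
      zero_mem' := fun g => by rw [𝒜.comp_zero']; exact hM0
      one_mem' := fun g => by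
        by_cases h : g = 1
        · subst h
          rw [𝒜.comp_of_mem 𝒜.one_mem]
          exact Or.inr ⟨1, hC1, rfl⟩
        · rw [𝒜.comp_one_ne h]
          exact hM0
      add_mem' := by
        intro x y hx hy g
        rw [𝒜.comp_add]
        exact hMadd g _ _ (hx g) (hy g) (𝒜.comp_mem x g) (𝒜.comp_mem y g)
      neg_mem' := by
        intro x hx g
        rw [𝒜.comp_neg']
        exact hMneg _ (hx g)
      mul_mem' := by
        intro x y hx hy g
        exact hOmul x y hx hy g } with hOdef
  have hOmem : ∀ x : L, x ∈ O ↔ ∀ g, 𝒜.comp x g ∈ M := fun x => Iff.rfl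
  have hx_sum : ∀ x : L, x = ∑ g ∈ (𝒜.finite_support x).toFinset, 𝒜.comp x g := by
    intro x
    have h7 := 𝒜.sum_comp x
    rw [finsum_eq_sum _ (𝒜.finite_support x)] at h7
    exact h7.symm
  refine ⟨O, ⟨⟨le_top, ?_, ?_⟩, ?_⟩, ?_, ?_⟩
  · -- graded subring
    intro x hx g g'
    exact hMcomp _ (hx g) g'
  · -- valuation property
    intro f _ hf0 hfh
    obtain ⟨u, hu⟩ := hunit f hf0 hfh
    rcases hCt u with h | h
    · left
      intro g
      rw [← hu]
      exact hMcomp _ (Or.inr ⟨u, h, rfl⟩) g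
    · right
      have h8 : Ring.inverse f = (((u⁻¹ : Λs) : Lˣ) : L) := by
        rw [hval_inv u, hu]
      intro g
      rw [h8]
      exact hMcomp _ (Or.inr ⟨u⁻¹, h, rfl⟩) g
  · -- l ≤ O
    intro x hx g
    have hcl : 𝒜.comp x g ∈ l := hl.1 x hx g
    rcases eq_or_ne (𝒜.comp x g) 0 with h0 | h0
    · rw [h0]; exact hM0
    · obtain ⟨u, hu⟩ := hunit _ h0 ⟨g, 𝒜.comp_mem x g⟩
      have h9 : u ∈ CB := by
        refine ⟨by rw [hu]; exact hlO'' hcl, g, ?_, by rw [hu]; exact 𝒜.comp_mem x g⟩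
        exact hlH _ hcl h0 g (𝒜.comp_mem x g)
      have huC : u ∈ C := by
        have := hCB' ▸ h9
        exact this.1
      rw [← hu]
      exact Or.inr ⟨u, huC, rfl⟩
  · -- O ⊓ K = O'
    apply le_antisymm
    · intro x hx
      rw [Subring.mem_inf] at hx
      obtain ⟨hxO, hxK⟩ := hx
      have hcomps : ∀ g, 𝒜.comp x g ∈ O' := by
        intro g
        rcases hxO g with h0 | ⟨u, huC, hu⟩
        · rw [h0]; exact O'.zero_mem
        · have huA : u ∈ A' := show ((u : Lˣ) : L) ∈ K by rw [hu]; exact hK.1 x hxK g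
          have h10 : u ∈ CA := by rw [← hCA']; exact ⟨huC, huA⟩
          rw [← hu]
          exact h10
      rw [hx_sum x]
      exact O'.sum_mem (fun g _ => hcomps g)
    · intro x hx
      rw [Subring.mem_inf]
      refine ⟨?_, hO'.1 hx⟩
      intro g
      have hcl : 𝒜.comp x g ∈ O' := hO'.2.1 x hx g
      rcases eq_or_ne (𝒜.comp x g) 0 with h0 | h0
      · rw [h0]; exact hM0
      · obtain ⟨u, hu⟩ := hunit _ h0 ⟨g, 𝒜.comp_mem x g⟩
        have h11 : u ∈ CA := show ((u : Lˣ) : L) ∈ O' by rw [hu]; exact hcl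
        have huC : u ∈ C := by
          have := hCA' ▸ h11
          exact this.1
        rw [← hu]
        exact Or.inr ⟨u, huC, rfl⟩
  · -- ↑O ∩ HPart = O''
    apply Set.Subset.antisymm
    · rintro x ⟨hxO, -, hxH⟩
      have hcomps : ∀ g, 𝒜.comp x g ∈ O'' := by
        intro g
        by_cases hgH : g ∈ H
        · rcases hxO g with h0 | ⟨u, huC, hu⟩
          · rw [h0]; exact hO''0
          · have huB : u ∈ B' := ⟨g, hgH, by rw [hu]; exact 𝒜.comp_mem x g⟩
            have h12 : u ∈ CB := by rw [← hCB']; exact ⟨huC, huB⟩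
            rw [← hu]
            exact h12.1
        · rw [hxH g hgH]; exact hO''0
      rw [hx_sum x]
      exact Finset.sum_induction _ (· ∈ O'') (fun a b ha hb => hO''add a ha b hb)
        hO''0 (fun g _ => hcomps g)
    · intro x hx
      have hxH : x ∈ HPart 𝒜 H Set.univ := hO''F hx
      refine ⟨?_, hxH⟩
      intro g
      have hcl : 𝒜.comp x g ∈ O'' := hO''comp x hx g
      rcases eq_or_ne (𝒜.comp x g) 0 with h0 | h0
      · rw [h0]; exact hM0
      · have hgH : g ∈ H := by
          by_contra hg
          exact h0 (hxH.2 g hg)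
        obtain ⟨u, hu⟩ := hunit _ h0 ⟨g, 𝒜.comp_mem x g⟩
        have h13 : u ∈ CB :=
          ⟨by rw [hu]; exact hcl, g, hgH, by rw [hu]; exact 𝒜.comp_mem x g⟩
        have huC : u ∈ C := by
          have := hCB' ▸ h13
          exact this.1
        rw [← hu]
        exact Or.inr ⟨u, huC, rfl⟩


end Statement17
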